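/- Let N ≥ 1 be an integer, let α ∈ (−1,1) with α ≠ 0, and set κ := √(1−α²) and λ := −(1−κ)/α (so that |λ| < 1 and λ ≠ 0). Let H be the real (2N+1)×(2N+1) symmetric tridiagonal matrix with rows and columns indexed by i ∈ {−N,…,N}, with diagonal entries H_{ii} = 2 for |i| < N and H_{NN} = H_{−N,−N} = 1, off-diagonal entries H_{ij} = α for |i−j| = 1, and H_{ij} = 0 for |i−j| > 1. Define the matrix M by M_{ij} = λ^{−i−j}(λ^{2i} + λ^{2N})(λ^{2(j+N)} + 1)/(2κ(1−λ^{4N})) for j ≤ i, and M_{ij} = λ^{−i−j}(λ^{2j} + λ^{2N})(λ^{2(i+N)} + 1)/(2κ(1−λ^{4N})) for j > i. Then H is invertible and M = H⁻¹ (i.e., H·M equals the identity matrix). -/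

import Mathlib

set_option maxHeartbeats 4000000

private lemma sum_ite_int {m : ℕ} (c : ℤ) (f : Fin m → ℝ) (k0 : Fin m) (hk0 : (k0 : ℤ) = c) :
    (∑ k : Fin m, if (k : ℤ) = c then f k else 0) = f k0 := by
  rw [Finset.sum_eq_single k0]
  · rw [if_pos hk0]
  · intro b _ hb
    rw [if_neg]
    intro hbc
    exact hb (Fin.ext (by omega))
  · intro h; exact absurd (Finset.mem_univ k0) h

private lemma sum_ite_int_zero {m : ℕ} (c : ℤ) (f : Fin m → ℝ) (h : ∀ k : Fin m, (k : ℤ) ≠ c) :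
    (∑ k : Fin m, if (k : ℤ) = c then f k else 0) = 0 :=
  Finset.sum_eq_zero fun k _ => if_neg (h k)

/-- explicit inverse of the tridiagonal Hessian with free boundary
conditions.  Matrices are indexed by `Fin (2N+1)`, where the index `i` corresponds to
the integer index `i' = i - N ∈ {-N,…,N}` of the paper. -/
theorem stmt_7 (N : ℕ) (hN : 1 ≤ N) (α : ℝ) (hα : α ∈ Set.Ioo (-1 : ℝ) 1) (hα0 : α ≠ 0)
    (κ l : ℝ) (hκ : κ = Real.sqrt (1 - α ^ 2)) (hl : l = -(1 - κ) / α)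
    (H M : Matrix (Fin (2 * N + 1)) (Fin (2 * N + 1)) ℝ)
    (hH : ∀ i j : Fin (2 * N + 1),
      H i j =
        if i = j then (if (i : ℕ) = 0 ∨ (i : ℕ) = 2 * N then 1 else 2)
        else if ((i : ℤ) - (j : ℤ)).natAbs = 1 then α else 0)
    (hM : ∀ i j : Fin (2 * N + 1),
      M i j =
        if ((j : ℤ) - N) ≤ ((i : ℤ) - N) then
          l ^ (-(((i : ℤ) - N) + ((j : ℤ) - N))) *
              (l ^ (2 * ((i : ℤ) - N)) + l ^ (2 * (N : ℤ))) *
              (l ^ (2 * (((j : ℤ) - N) + N)) + 1) /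
            (2 * κ * (1 - l ^ (4 * N)))
        else
          l ^ (-(((i : ℤ) - N) + ((j : ℤ) - N))) *
              (l ^ (2 * ((j : ℤ) - N)) + l ^ (2 * (N : ℤ))) *
              (l ^ (2 * (((i : ℤ) - N) + N)) + 1) /
            (2 * κ * (1 - l ^ (4 * N)))) :
    IsUnit H ∧ M = H⁻¹ := by
  obtain ⟨hα1, hα2⟩ := hα
  have hα2' : α ^ 2 < 1 := by nlinarith
  have hα2pos : 0 < α ^ 2 := by positivity
  have hκpos : 0 < κ := hκ ▸ Real.sqrt_pos.mpr (by nlinarith)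
  have hκsq : κ ^ 2 = 1 - α ^ 2 := by
    rw [hκ]; exact Real.sq_sqrt (by nlinarith)
  have hκlt : κ < 1 := by nlinarith
  have hal : α * l = κ - 1 := by rw [hl]; field_simp; ring
  have hl0 : l ≠ 0 := by
    rw [hl]
    exact div_ne_zero (neg_ne_zero.mpr (by intro h; nlinarith [sub_eq_zero.mp h])) hα0
  have hlsq : l ^ 2 < 1 := by
    have hsq2 : α ^ 2 * l ^ 2 = (κ - 1) ^ 2 := by rw [← mul_pow, hal]
    nlinarith [mul_pos hκpos (show (0:ℝ) < 1 - κ by linarith)]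
  have h1l2 : (1:ℝ) + l ^ 2 ≠ 0 := by positivity
  have hml2 : (1:ℝ) - l ^ 2 ≠ 0 := by nlinarith
  have hrel : α * l ^ 2 + 2 * l + α = 0 := by
    have : α * (α * l ^ 2 + 2 * l + α) = 0 := by
      have : (α * l) * (α * l) = (κ - 1) * (κ - 1) := by rw [hal]
      nlinarith [hal]
    rcases mul_eq_zero.mp this with h | h
    · exact absurd h hα0
    · exact h
  have hαv : α = -2 * l / (1 + l ^ 2) := by
    field_simp
    linear_combination hrel
  have hκv : κ = (1 - l ^ 2) / (1 + l ^ 2) := by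
    have : κ = 1 + α * l := by linarith [hal]
    rw [this, hαv]; field_simp; ring
  have h4Npow : l ^ (4 * N) = (l ^ 2) ^ (2 * N) := by
    rw [← pow_mul]; ring_nf
  have hn4pos : 0 < 1 - l ^ (4 * N) := by
    rw [h4Npow]
    have h1 : (l ^ 2) ^ (2 * N) < 1 := by
      apply pow_lt_one₀ (sq_nonneg l) hlsq (by omega)
    linarith
  have hn4 : (1:ℝ) - l ^ (4 * N) ≠ 0 := ne_of_gt hn4pos
  have hκ0 : κ ≠ 0 := ne_of_gt hκpos
  have h4N' : l ^ (4 * N) = (l ^ N) ^ 4 := by rw [show 4 * N = N * 4 by ring, pow_mul]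
  have hκl2 : κ = 1 + α * l := by linarith [hal]
  have hD : (2 * κ * (1 - l ^ (4 * N))) ≠ 0 := mul_ne_zero (mul_ne_zero two_ne_zero hκ0) hn4
  have hn4' : (1:ℝ) - (l ^ N) ^ 4 ≠ 0 := h4N' ▸ hn4
  have hlN : l ^ N ≠ 0 := pow_ne_zero _ hl0
  -- main computation
  have keymul : H * M = 1 := by
    ext i j
    rw [Matrix.mul_apply, Matrix.one_apply]
    have hsum : ∀ k : Fin (2 * N + 1), H i k * M k j =
        (if k = i then (if (i : ℕ) = 0 ∨ (i : ℕ) = 2 * N then (1:ℝ) else 2) * M k j else 0)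
        + ((if (k : ℤ) = (i : ℤ) - 1 then α * M k j else 0)
        + (if (k : ℤ) = (i : ℤ) + 1 then α * M k j else 0)) := by
      intro k
      rw [hH]
      by_cases h1 : i = k
      · subst h1
        rw [if_pos rfl, if_pos rfl, if_neg (by omega : ¬((i:ℤ) = (i:ℤ) - 1)),
          if_neg (by omega : ¬((i:ℤ) = (i:ℤ) + 1))]
        ring
      · have hki : ¬(k = i) := fun h => h1 h.symm
        rw [if_neg h1, if_neg hki]
        by_cases h2 : ((i:ℤ) - (k:ℤ)).natAbs = 1
        · rw [if_pos h2]
          by_cases h3 : (k:ℤ) = (i:ℤ) - 1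
          · rw [if_pos h3, if_neg (by omega : ¬((k:ℤ) = (i:ℤ) + 1))]; ring
          · rw [if_neg h3, if_pos (by omega : (k:ℤ) = (i:ℤ) + 1)]; ring
        · have h1' : (i:ℕ) ≠ (k:ℕ) := fun h => h1 (Fin.ext h)
          rw [if_neg h2, if_neg (by omega : ¬((k:ℤ) = (i:ℤ) - 1)),
            if_neg (by omega : ¬((k:ℤ) = (i:ℤ) + 1))]; ring
    simp only [hsum]
    rw [Finset.sum_add_distrib, Finset.sum_ite_eq' Finset.univ i
      (fun k => (if (i : ℕ) = 0 ∨ (i : ℕ) = 2 * N then (1:ℝ) else 2) * M k j),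
      Finset.sum_add_distrib]
    simp only [Finset.mem_univ, if_true]
    by_cases hi0 : (i : ℕ) = 0
    · obtain ⟨k1, hk1⟩ : ∃ k : Fin (2 * N + 1), (k : ℤ) = (i : ℤ) + 1 :=
        ⟨⟨(i : ℕ) + 1, by omega⟩, by first | (simp; omega) | simp | omega⟩
      rw [if_pos (Or.inl hi0),
        sum_ite_int_zero ((i:ℤ) - 1) _ (fun k => by omega),
        sum_ite_int ((i:ℤ) + 1) _ k1 hk1]
      by_cases hij : i = j
      · rw [if_pos hij]
        subst hij
        rw [hM i i, if_pos (le_refl ((i:ℤ) - (N:ℤ))), hM k1 i,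
          if_pos (by omega : ((i:ℤ) - (N:ℤ) ≤ (k1:ℤ) - (N:ℤ)))]
        rw [hk1, show ((i:ℕ):ℤ) = 0 from by omega]
        simp only [zero_add, add_zero, ← mul_div_assoc, ← add_div]
        rw [div_eq_iff hD]
        simp only [two_mul, zpow_add₀ hl0, zpow_sub₀ hl0, zpow_neg, zpow_one, zpow_zero,
          zpow_natCast]
        rw [h4N']
        generalize hgn : l ^ N = nn
        have hgn1 : nn ≠ 0 := hgn ▸ hlN
        rw [hκl2, hαv]
        field_simp
        ring
      · rw [if_neg hij]
        have hj1 : 1 ≤ (j : ℕ) := by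
          rcases Nat.eq_zero_or_pos (j : ℕ) with h | h
          · exact absurd (Fin.ext (by omega) : i = j) hij
          · omega
        have hje : l ^ (j:ℕ) ≠ 0 := pow_ne_zero _ hl0
        by_cases hj2 : (j : ℕ) = 1
        · -- A2a : M i j above branch, M k1 j below (diagonal) branch
          rw [hM i j, if_neg (by omega), hM k1 j,
            if_pos (by omega : ((j:ℤ) - (N:ℤ) ≤ (k1:ℤ) - (N:ℤ)))]
          rw [hk1, show ((i:ℕ):ℤ) = 0 from by omega, show ((j:ℕ):ℤ) = 1 from by omega]
          simp only [zero_add, add_zero, ← mul_div_assoc, ← add_div]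
          rw [div_eq_iff hD]
          simp only [two_mul, zpow_add₀ hl0, zpow_sub₀ hl0, zpow_neg, zpow_one, zpow_zero,
            zpow_natCast]
          rw [h4N']
          generalize hgn : l ^ N = nn
          have hgn1 : nn ≠ 0 := hgn ▸ hlN
          generalize hgb : l ^ (j : ℕ) = bj
          have hgb1 : bj ≠ 0 := hgb ▸ hje
          rw [hκl2, hαv]
          field_simp
          ring
        · -- A2b : both above branch
          rw [hM i j, if_neg (by omega), hM k1 j, if_neg (by omega)]
          rw [hk1, show ((i:ℕ):ℤ) = 0 from by omega]
          simp only [zero_add, add_zero, ← mul_div_assoc, ← add_div]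
          rw [div_eq_iff hD]
          simp only [two_mul, zpow_add₀ hl0, zpow_sub₀ hl0, zpow_neg, zpow_one, zpow_zero,
            zpow_natCast]
          rw [h4N']
          generalize hgn : l ^ N = nn
          have hgn1 : nn ≠ 0 := hgn ▸ hlN
          generalize hgb : l ^ (j : ℕ) = bj
          have hgb1 : bj ≠ 0 := hgb ▸ hje
          rw [hκl2, hαv]
          field_simp
          ring
    · by_cases hiN : (i : ℕ) = 2 * N
      · obtain ⟨km, hkm⟩ : ∃ k : Fin (2 * N + 1), (k : ℤ) = (i : ℤ) - 1 :=
          ⟨⟨(i : ℕ) - 1, by omega⟩, by first | (simp; omega) | simp | omega⟩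
        rw [if_pos (Or.inr hiN),
          sum_ite_int ((i:ℤ) - 1) _ km hkm,
          sum_ite_int_zero ((i:ℤ) + 1) _ (fun k => by omega)]
        by_cases hij : i = j
        · rw [if_pos hij]
          subst hij
          rw [hM i i, if_pos (le_refl ((i:ℤ) - (N:ℤ))), hM km i,
            if_neg (by omega : ¬((i:ℤ) - (N:ℤ) ≤ (km:ℤ) - (N:ℤ)))]
          rw [hkm, show ((i:ℕ):ℤ) = 2 * (N:ℤ) from by omega]
          simp only [zero_add, add_zero, ← mul_div_assoc, ← add_div]
          rw [div_eq_iff hD]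
          simp only [two_mul, zpow_add₀ hl0, zpow_sub₀ hl0, zpow_neg, zpow_one, zpow_zero,
            zpow_natCast]
          rw [h4N']
          generalize hgn : l ^ N = nn
          have hgn1 : nn ≠ 0 := hgn ▸ hlN
          rw [hκl2, hαv]
          field_simp
          ring
        · rw [if_neg hij]
          have hjlt : (j : ℕ) ≤ 2 * N - 1 := by
            have : (j : ℕ) ≠ 2 * N := fun h => hij (Fin.ext (by omega))
            omega
          have hje : l ^ (j:ℕ) ≠ 0 := pow_ne_zero _ hl0
          -- B2 : both below branch
          rw [hM i j, if_pos (by omega : ((j:ℤ) - (N:ℤ) ≤ (i:ℤ) - (N:ℤ))), hM km j,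
            if_pos (by omega : ((j:ℤ) - (N:ℤ) ≤ (km:ℤ) - (N:ℤ)))]
          rw [hkm, show ((i:ℕ):ℤ) = 2 * (N:ℤ) from by omega]
          simp only [zero_add, add_zero, ← mul_div_assoc, ← add_div]
          rw [div_eq_iff hD]
          simp only [two_mul, zpow_add₀ hl0, zpow_sub₀ hl0, zpow_neg, zpow_one, zpow_zero,
            zpow_natCast]
          rw [h4N']
          generalize hgn : l ^ N = nn
          have hgn1 : nn ≠ 0 := hgn ▸ hlN
          generalize hgb : l ^ (j : ℕ) = bj
          have hgb1 : bj ≠ 0 := hgb ▸ hje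
          rw [hκl2, hαv]
          field_simp
          ring
      · obtain ⟨km, hkm⟩ : ∃ k : Fin (2 * N + 1), (k : ℤ) = (i : ℤ) - 1 :=
          ⟨⟨(i : ℕ) - 1, by omega⟩, by first | (simp; omega) | simp | omega⟩
        obtain ⟨kp, hkp⟩ : ∃ k : Fin (2 * N + 1), (k : ℤ) = (i : ℤ) + 1 :=
          ⟨⟨(i : ℕ) + 1, by omega⟩, by first | (simp; omega) | simp | omega⟩
        rw [if_neg (by tauto),
          sum_ite_int ((i:ℤ) - 1) _ km hkm,
          sum_ite_int ((i:ℤ) + 1) _ kp hkp]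
        have hie : l ^ (i:ℕ) ≠ 0 := pow_ne_zero _ hl0
        by_cases hij : i = j
        · rw [if_pos hij]
          subst hij
          -- km above branch, i diag (below), kp below branch
          rw [hM i i, if_pos (le_refl ((i:ℤ) - (N:ℤ))), hM km i,
            if_neg (by omega : ¬((i:ℤ) - (N:ℤ) ≤ (km:ℤ) - (N:ℤ))), hM kp i,
            if_pos (by omega : ((i:ℤ) - (N:ℤ) ≤ (kp:ℤ) - (N:ℤ)))]
          rw [hkm, hkp]
          simp only [zero_add, add_zero, ← mul_div_assoc, ← add_div]
          rw [div_eq_iff hD]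
          simp only [two_mul, zpow_add₀ hl0, zpow_sub₀ hl0, zpow_neg, zpow_one, zpow_zero,
            zpow_natCast]
          rw [h4N']
          generalize hgn : l ^ N = nn
          have hgn1 : nn ≠ 0 := hgn ▸ hlN
          generalize hgc : l ^ (i : ℕ) = ci
          have hgc1 : ci ≠ 0 := hgc ▸ hie
          rw [hκl2, hαv]
          field_simp
          ring
        · rw [if_neg hij]
          have hij' : (i : ℕ) ≠ (j : ℕ) := fun h => hij (Fin.ext h)
          have hje : l ^ (j:ℕ) ≠ 0 := pow_ne_zero _ hl0
          rcases lt_or_gt_of_ne hij' with hlt | hgt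
        -- i < j
          · by_cases hj1 : (j : ℕ) = (i : ℕ) + 1
            · -- j = i+1 : km above, i above, kp below (diag)
              rw [hM i j, if_neg (by omega), hM km j, if_neg (by omega), hM kp j,
                if_pos (by omega : ((j:ℤ) - (N:ℤ) ≤ (kp:ℤ) - (N:ℤ)))]
              rw [hkm, hkp, show ((j:ℕ):ℤ) = ((i:ℕ):ℤ) + 1 from by omega]
              simp only [zero_add, add_zero, ← mul_div_assoc, ← add_div]
              rw [div_eq_iff hD]
              simp only [two_mul, zpow_add₀ hl0, zpow_sub₀ hl0, zpow_neg, zpow_one, zpow_zero,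
                zpow_natCast]
              rw [h4N']
              generalize hgn : l ^ N = nn
              have hgn1 : nn ≠ 0 := hgn ▸ hlN
              generalize hgc : l ^ (i : ℕ) = ci
              have hgc1 : ci ≠ 0 := hgc ▸ hie
              generalize hgb : l ^ (j : ℕ) = bj
              have hgb1 : bj ≠ 0 := hgb ▸ hje
              rw [hκl2, hαv]
              field_simp
              ring
            · -- j ≥ i+2 : all above
              rw [hM i j, if_neg (by omega), hM km j, if_neg (by omega), hM kp j,
                if_neg (by omega)]
              rw [hkm, hkp]
              simp only [zero_add, add_zero, ← mul_div_assoc, ← add_div]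
              rw [div_eq_iff hD]
              simp only [two_mul, zpow_add₀ hl0, zpow_sub₀ hl0, zpow_neg, zpow_one, zpow_zero,
                zpow_natCast]
              rw [h4N']
              generalize hgn : l ^ N = nn
              have hgn1 : nn ≠ 0 := hgn ▸ hlN
              generalize hgc : l ^ (i : ℕ) = ci
              have hgc1 : ci ≠ 0 := hgc ▸ hie
              generalize hgb : l ^ (j : ℕ) = bj
              have hgb1 : bj ≠ 0 := hgb ▸ hje
              rw [hκl2, hαv]
              field_simp
              ring
          · -- j < i : all below
            rw [hM i j, if_pos (by omega : ((j:ℤ) - (N:ℤ) ≤ (i:ℤ) - (N:ℤ))), hM km j,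
              if_pos (by omega : ((j:ℤ) - (N:ℤ) ≤ (km:ℤ) - (N:ℤ))), hM kp j,
              if_pos (by omega : ((j:ℤ) - (N:ℤ) ≤ (kp:ℤ) - (N:ℤ)))]
            rw [hkm, hkp]
            simp only [zero_add, add_zero, ← mul_div_assoc, ← add_div]
            rw [div_eq_iff hD]
            simp only [two_mul, zpow_add₀ hl0, zpow_sub₀ hl0, zpow_neg, zpow_one, zpow_zero,
              zpow_natCast]
            rw [h4N']
            generalize hgn : l ^ N = nn
            have hgn1 : nn ≠ 0 := hgn ▸ hlN
            generalize hgc : l ^ (i : ℕ) = ci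
            have hgc1 : ci ≠ 0 := hgc ▸ hie
            generalize hgb : l ^ (j : ℕ) = bj
            have hgb1 : bj ≠ 0 := hgb ▸ hje
            rw [hκl2, hαv]
            field_simp
            ring
  refine ⟨⟨⟨H, M, keymul, mul_eq_one_comm.mp keymul⟩, rfl⟩, (Matrix.inv_eq_right_inv keymul).symm⟩
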